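/- arXiv:2208.01079 — 3 statements merged into one kernel-verified Lean document; each statement's English description precedes it below -/
import Mathlib

section
/- Let M ∈ ℝ^{m×m} and N ∈ ℝ^{n×n} be symmetric positive definite, A ∈ ℝ^{m×n}, and b ∈ ℝⁿ nonzero with β₁ := √(bᵀ N⁻¹ b) and q₁ := N⁻¹ b/β₁. Suppose V ∈ ℝ^{m×n} and Q ∈ ℝ^{n×n} satisfy the complete bidiagonalization relations A Q = M V B, Aᵀ V = N Q Bᵀ, Vᵀ M V = I_n, Qᵀ N Q = I_n, where B is an invertible n×n matrix and the first column of Q is q₁. Then u := V z and p := Q y with z := β₁ B⁻ᵀ e₁ and y := −B⁻¹ z solve the saddle-point system: M u + A p = 0 and Aᵀ u = b. -/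
open Matrix

/-- After a complete bidiagonalization `A Q = M V B`, `Aᵀ V = N Q Bᵀ` with
`M`-orthonormal `V`, `N`-orthonormal `Q` (first column `q₁ = N⁻¹b/β₁`), the vectors
`u = V z`, `p = Q y` with `z = β₁ B⁻ᵀ e₁`, `y = −B⁻¹ z` solve the saddle-point system
`M u + A p = 0`, `Aᵀ u = b`. -/
theorem stmt7 {m n : ℕ} [NeZero n] (M : Matrix (Fin m) (Fin m) ℝ)
    (N : Matrix (Fin n) (Fin n) ℝ) (A : Matrix (Fin m) (Fin n) ℝ)
    (hM : M.PosDef) (hN : N.PosDef)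
    (b : Fin n → ℝ) (hb : b ≠ 0)
    (β₁ : ℝ) (hβ : β₁ = Real.sqrt (b ⬝ᵥ N⁻¹ *ᵥ b))
    (q₁ : Fin n → ℝ) (hq : q₁ = β₁⁻¹ • (N⁻¹ *ᵥ b))
    (V : Matrix (Fin m) (Fin n) ℝ) (Q B : Matrix (Fin n) (Fin n) ℝ)
    (hB : IsUnit B.det)
    (h1 : A * Q = M * V * B) (h2 : Aᵀ * V = N * Q * Bᵀ)
    (h3 : Vᵀ * M * V = 1) (h4 : Qᵀ * N * Q = 1)
    (hcol : ∀ i, Q i 0 = q₁ i)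
    (z y : Fin n → ℝ)
    (hz : z = β₁ • (Bᵀ)⁻¹ *ᵥ (Pi.single (0 : Fin n) (1 : ℝ) : Fin n → ℝ))
    (hy : y = -(B⁻¹ *ᵥ z)) :
    M *ᵥ (V *ᵥ z) + A *ᵥ (Q *ᵥ y) = 0 ∧ Aᵀ *ᵥ (V *ᵥ z) = b := by
  have hBT : IsUnit (Bᵀ).det := by rwa [Matrix.det_transpose]
  have hNd : IsUnit N.det := isUnit_iff_ne_zero.mpr hN.det_pos.ne'
  have hNinv : (N⁻¹).PosDef := hN.inv
  have hpos : 0 < b ⬝ᵥ N⁻¹ *ᵥ b := by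
    have := hNinv.dotProduct_mulVec_pos hb
    simpa using this
  have hβpos : 0 < β₁ := by rw [hβ]; exact Real.sqrt_pos.mpr hpos
  have hβne : β₁ ≠ 0 := ne_of_gt hβpos
  constructor
  · have key : A * (Q * B⁻¹) = M * V := by
      rw [← Matrix.mul_assoc, h1, Matrix.mul_assoc, Matrix.mul_nonsing_inv _ hB,
        Matrix.mul_one]
    rw [hy, mulVec_mulVec, mulVec_neg, mulVec_mulVec, mulVec_neg, mulVec_mulVec, key]
    exact add_neg_cancel _
  · have hQe : Q *ᵥ (Pi.single (0 : Fin n) (1 : ℝ)) = q₁ := by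
      funext i
      rw [mulVec_single]
      simpa using hcol i
    have key : N * Q * Bᵀ * Bᵀ⁻¹ = N * Q := by
      rw [Matrix.mul_assoc, Matrix.mul_nonsing_inv _ hBT, Matrix.mul_one]
    rw [mulVec_mulVec, h2, hz, mulVec_smul, mulVec_mulVec, key,
      ← mulVec_mulVec, hQe, hq, mulVec_smul, mulVec_mulVec,
      Matrix.mul_nonsing_inv _ hNd, one_mulVec, smul_smul,
      mul_inv_cancel₀ hβne, one_smul]
end

section
/- Let N ∈ ℝ^{n×n} be symmetric positive definite, A ∈ ℝ^{m×n}, and b ∈ ℝⁿ nonzero with β₁ := √(bᵀ N⁻¹ b) and q₁ := N⁻¹ b/β₁. Suppose after k < n steps the partial bidiagonalization relations hold: Aᵀ V_k = N Q_k B_kᵀ + β_{k+1} N q_{k+1} e_kᵀ, where Q_k ∈ ℝ^{n×k} is N-orthonormal with first column q₁, V_k ∈ ℝ^{m×k}, B_k is the k×k upper bidiagonal matrix with nonzero diagonal α₁,…,α_k and superdiagonal β₂,…,β_k, q_{k+1} ∈ ℝⁿ satisfies q_{k+1}ᵀ N q_{k+1} = 1, and e_k is the k-th standard basis vector. Then for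 z_k := β₁ B_k⁻ᵀ e₁ with last entry ζ_k and u_k := V_k z_k, the constraint residual satisfies Aᵀ u_k − b = ζ_k β_{k+1} N q_{k+1}, and hence its N⁻¹-norm equals |ζ_k| β_{k+1}. -/
open Matrix

lemma vecMulVec_mulVec' {n k : Type*} [Fintype k] (w : n → ℝ) (v x : k → ℝ) :
    Matrix.vecMulVec w v *ᵥ x = (v ⬝ᵥ x) • w := by
  funext i
  simp only [Matrix.mulVec, Matrix.vecMulVec_apply, dotProduct, Pi.smul_apply,
    smul_eq_mul, Finset.sum_mul]
  exact Finset.sum_congr rfl fun j _ => by ring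

/-- Constraint residual of the GKB iterate: under the partial bidiagonalization
relations `Aᵀ V_k = N Q_k B_kᵀ + β_{k+1} N q_{k+1} e_kᵀ`, the iterate `u_k = V_k z_k`
with `z_k = β₁ B_k⁻ᵀ e₁` satisfies `Aᵀ u_k − b = ζ_k β_{k+1} N q_{k+1}`, whose
`N⁻¹`-norm is `|ζ_k| β_{k+1}`. -/
theorem stmt11 {m n k : ℕ} (hk : 0 < k) (hkn : k < n)
    (N : Matrix (Fin n) (Fin n) ℝ) (hN : N.PosDef)
    (A : Matrix (Fin m) (Fin n) ℝ)
    (b : Fin n → ℝ) (hb : b ≠ 0)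
    (β₁ : ℝ) (hβ : β₁ = Real.sqrt (b ⬝ᵥ N⁻¹ *ᵥ b))
    (q₁ : Fin n → ℝ) (hq : q₁ = β₁⁻¹ • (N⁻¹ *ᵥ b))
    (V : Matrix (Fin m) (Fin k) ℝ) (Q : Matrix (Fin n) (Fin k) ℝ)
    (hQ : Qᵀ * N * Q = 1) (hcol : ∀ i, Q i ⟨0, hk⟩ = q₁ i)
    (α β : Fin k → ℝ) (hα : ∀ i, α i ≠ 0)
    (B : Matrix (Fin k) (Fin k) ℝ)
    (hB : B = Matrix.of fun i j =>
      if j = i then α i else if (j : ℕ) = (i : ℕ) + 1 then β j else 0)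
    (βk1 : ℝ) (hβk1 : 0 ≤ βk1)
    (qk1 : Fin n → ℝ) (hqk1 : qk1 ⬝ᵥ N *ᵥ qk1 = 1)
    (hrel : Aᵀ * V = N * Q * Bᵀ +
      βk1 • Matrix.vecMulVec (N *ᵥ qk1)
        (Pi.single (⟨k - 1, by omega⟩ : Fin k) (1 : ℝ) : Fin k → ℝ))
    (z : Fin k → ℝ)
    (hz : z = β₁ • (Bᵀ)⁻¹ *ᵥ (Pi.single (⟨0, hk⟩ : Fin k) (1 : ℝ) : Fin k → ℝ))
    (uk : Fin m → ℝ) (huk : uk = V *ᵥ z) :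
    Aᵀ *ᵥ uk - b = (z ⟨k - 1, by omega⟩ * βk1) • (N *ᵥ qk1) ∧
    Real.sqrt ((Aᵀ *ᵥ uk - b) ⬝ᵥ N⁻¹ *ᵥ (Aᵀ *ᵥ uk - b)) = |z ⟨k - 1, by omega⟩| * βk1 := by
  have hNdet : IsUnit N.det := isUnit_iff_ne_zero.mpr (ne_of_gt hN.det_pos)
  -- β₁ > 0
  have hNinvPD : (N⁻¹).PosDef := hN.inv
  have hbq : 0 < b ⬝ᵥ N⁻¹ *ᵥ b := by simpa using hNinvPD.dotProduct_mulVec_pos hb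
  have hβpos : 0 < β₁ := hβ ▸ Real.sqrt_pos.mpr hbq
  have hβsq : β₁ * β₁ = b ⬝ᵥ N⁻¹ *ᵥ b := by
    rw [hβ, Real.mul_self_sqrt hbq.le]
  -- B is invertible (upper triangular with nonzero diagonal)
  have hBtri : B.BlockTriangular id := by
    intro i j hij
    simp only [hB, Matrix.of_apply]
    have h1 : j ≠ i := ne_of_lt hij
    have h2 : (j : ℕ) < (i : ℕ) := hij
    rw [if_neg h1, if_neg (by omega)]
  have hBdet : B.det = ∏ i, α i := by
    rw [Matrix.det_of_upperTriangular hBtri]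
    congr 1; funext i; simp [hB]
  have hBunit : IsUnit B.det := by
    rw [hBdet]; exact isUnit_iff_ne_zero.mpr (Finset.prod_ne_zero_iff.mpr fun i _ => hα i)
  have hBTunit : IsUnit (Bᵀ).det := by rwa [Matrix.det_transpose]
  set e₁ : Fin k → ℝ := (Pi.single (⟨0, hk⟩ : Fin k) (1 : ℝ)) with he₁
  set ek : Fin k → ℝ := (Pi.single (⟨k - 1, by omega⟩ : Fin k) (1 : ℝ)) with hek
  -- Bᵀ z = β₁ e₁
  have hBTz : Bᵀ *ᵥ z = β₁ • e₁ := by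
    rw [hz, Matrix.mulVec_smul, Matrix.mulVec_mulVec, Matrix.mul_nonsing_inv _ hBTunit,
      Matrix.one_mulVec]
  -- Q *ᵥ e₁ = q₁
  have hQe : Q *ᵥ e₁ = q₁ := by
    funext i
    rw [← hcol i]
    simp [Matrix.mulVec, he₁, dotProduct_single]
  -- main residual identity
  have hub : Aᵀ *ᵥ uk = b + (z ⟨k - 1, by omega⟩ * βk1) • (N *ᵥ qk1) := by
    have : Aᵀ *ᵥ uk = (Aᵀ * V) *ᵥ z := by rw [huk, Matrix.mulVec_mulVec]
    rw [this, hrel, Matrix.add_mulVec, Matrix.smul_mulVec, vecMulVec_mulVec']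
    have h1 : (N * Q * Bᵀ) *ᵥ z = b := by
      rw [Matrix.mul_assoc, ← Matrix.mulVec_mulVec, ← Matrix.mulVec_mulVec, hBTz,
        Matrix.mulVec_smul, hQe, hq]
      rw [Matrix.mulVec_smul, Matrix.mulVec_smul, smul_smul,
        mul_inv_cancel₀ (ne_of_gt hβpos), one_smul, Matrix.mulVec_mulVec,
        Matrix.mul_nonsing_inv _ hNdet, Matrix.one_mulVec]
    have h2 : ek ⬝ᵥ z = z ⟨k - 1, by omega⟩ := by
      simp [hek, single_dotProduct]
    rw [h1, h2, smul_smul, mul_comm βk1]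
  set c : ℝ := z ⟨k - 1, by omega⟩ * βk1 with hc
  have hres : Aᵀ *ᵥ uk - b = c • (N *ᵥ qk1) := by rw [hub]; abel
  refine ⟨hres, ?_⟩
  rw [hres]
  have : (c • (N *ᵥ qk1)) ⬝ᵥ N⁻¹ *ᵥ (c • (N *ᵥ qk1)) = c * c := by
    rw [Matrix.mulVec_smul, Matrix.mulVec_mulVec, Matrix.nonsing_inv_mul _ hNdet,
      Matrix.one_mulVec, smul_dotProduct, dotProduct_smul, smul_eq_mul,
      smul_eq_mul, dotProduct_comm, hqk1, mul_one]
  rw [this, Real.sqrt_mul_self_eq_abs, hc, abs_mul, abs_of_nonneg hβk1]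
end

section
/- Under the partial bidiagonalization relations Aᵀ V_k = N Q_k B_kᵀ + β_{k+1} N q_{k+1} e_kᵀ with Q_k ∈ ℝ^{n×k} N-orthonormal, first column q₁ = N⁻¹b/β₁ where β₁ = √(bᵀN⁻¹b) (b ≠ 0), B_k the k×k upper bidiagonal matrix with nonzero diagonal entries, and q_{k+1} N-orthogonal to every column of Q_k (Q_kᵀ N q_{k+1} = 0), the iterate u_k := V_k z_k with z_k := β₁ B_k⁻ᵀ e₁ satisfies the Galerkin orthogonality condition Q_kᵀ (Aᵀ u_k − b) = 0. -/
open Matrix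

lemma aux_vecMulVec {n k : ℕ} (w : Fin n → ℝ) (e z : Fin k → ℝ) :
    Matrix.vecMulVec w e *ᵥ z = (e ⬝ᵥ z) • w := by
  ext i
  simp only [Matrix.vecMulVec, Matrix.mulVec, dotProduct, Matrix.of_apply,
    Pi.smul_apply, smul_eq_mul, Finset.sum_mul, Finset.mul_sum]
  exact Finset.sum_congr rfl fun x _ => by ring

/-- Galerkin orthogonality of the GKB iterate: under the partial bidiagonalization
relations with `q_{k+1}` `N`-orthogonal to the columns of `Q_k`, the iterate
`u_k = V_k z_k` with `z_k = β₁ B_k⁻ᵀ e₁` satisfies `Q_kᵀ (Aᵀ u_k − b) = 0`. -/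
theorem stmt12 {m n k : ℕ} (hk : 0 < k)
    (N : Matrix (Fin n) (Fin n) ℝ) (hN : N.PosDef)
    (A : Matrix (Fin m) (Fin n) ℝ)
    (b : Fin n → ℝ) (hb : b ≠ 0)
    (β₁ : ℝ) (hβ : β₁ = Real.sqrt (b ⬝ᵥ N⁻¹ *ᵥ b))
    (q₁ : Fin n → ℝ) (hq : q₁ = β₁⁻¹ • (N⁻¹ *ᵥ b))
    (V : Matrix (Fin m) (Fin k) ℝ) (Q : Matrix (Fin n) (Fin k) ℝ)
    (hQ : Qᵀ * N * Q = 1) (hcol : ∀ i, Q i ⟨0, hk⟩ = q₁ i)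
    (α β : Fin k → ℝ) (hα : ∀ i, α i ≠ 0)
    (B : Matrix (Fin k) (Fin k) ℝ)
    (hB : B = Matrix.of fun i j =>
      if j = i then α i else if (j : ℕ) = (i : ℕ) + 1 then β j else 0)
    (βk1 : ℝ) (qk1 : Fin n → ℝ)
    (horth : Qᵀ *ᵥ (N *ᵥ qk1) = 0)
    (hrel : Aᵀ * V = N * Q * Bᵀ +
      βk1 • Matrix.vecMulVec (N *ᵥ qk1)
        (Pi.single (⟨k - 1, by omega⟩ : Fin k) (1 : ℝ) : Fin k → ℝ))
    (z : Fin k → ℝ)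
    (hz : z = β₁ • (Bᵀ)⁻¹ *ᵥ (Pi.single (⟨0, hk⟩ : Fin k) (1 : ℝ) : Fin k → ℝ))
    (uk : Fin m → ℝ) (huk : uk = V *ᵥ z) :
    Qᵀ *ᵥ (Aᵀ *ᵥ uk - b) = 0 := by
  set e0 : Fin k → ℝ := Pi.single (⟨0, hk⟩ : Fin k) (1 : ℝ) with he0
  set ek : Fin k → ℝ := Pi.single (⟨k - 1, by omega⟩ : Fin k) (1 : ℝ) with hek
  -- β₁ ≠ 0
  have hNinv : (N⁻¹).PosDef := hN.inv
  have hpos : 0 < b ⬝ᵥ N⁻¹ *ᵥ b := by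
    have := hNinv.dotProduct_mulVec_pos hb
    simpa using this
  have hβne : β₁ ≠ 0 := by
    rw [hβ]
    exact (Real.sqrt_pos.mpr hpos).ne'
  -- N invertible
  have hNdet : IsUnit N.det := hN.det_pos.ne'.isUnit
  -- B invertible
  have hBdet : IsUnit B.det := by
    have htri : B.BlockTriangular id := by
      intro i j hij
      have hlt : (j : ℕ) < (i : ℕ) := hij
      have h1 : ¬ (j = i) := by exact fun h => absurd h (by exact Fin.ne_of_lt hij)
      have h2 : ¬ ((j : ℕ) = (i : ℕ) + 1) := by omega
      simp [hB, h1, h2]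
    have : B.det = ∏ i, α i := by
      rw [Matrix.det_of_upperTriangular htri]
      simp [hB]
    rw [this]
    exact (Finset.prod_ne_zero_iff.mpr fun i _ => hα i).isUnit
  have hBT : Bᵀ * (Bᵀ)⁻¹ = 1 :=
    Matrix.mul_nonsing_inv _ (by rwa [Matrix.det_transpose])
  -- Bᵀ z = β₁ • e0
  have hBz : Bᵀ *ᵥ z = β₁ • e0 := by
    rw [hz, mulVec_smul, mulVec_mulVec, hBT, one_mulVec]
  -- b = β₁ • N *ᵥ q₁
  have hNq : N *ᵥ q₁ = β₁⁻¹ • b := by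
    rw [hq, mulVec_smul, mulVec_mulVec, Matrix.mul_nonsing_inv _ hNdet, one_mulVec]
  have hbeq : b = β₁ • N *ᵥ q₁ := by
    rw [hNq, smul_smul, mul_inv_cancel₀ hβne, one_smul]
  -- q₁ = Q *ᵥ e0
  have hq1 : q₁ = Q *ᵥ e0 := by
    ext i
    rw [he0, Matrix.mulVec_single]
    simp [hcol i]
  -- Qᵀ b = β₁ • e0
  have hQb : Qᵀ *ᵥ b = β₁ • e0 := by
    rw [hbeq, mulVec_smul, hq1, mulVec_mulVec, mulVec_mulVec, hQ, one_mulVec]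
  calc Qᵀ *ᵥ (Aᵀ *ᵥ uk - b)
      = Qᵀ *ᵥ (Aᵀ *ᵥ uk) - Qᵀ *ᵥ b := by rw [Matrix.mulVec_sub]
    _ = 0 := by
        rw [huk, mulVec_mulVec z Aᵀ V, hrel, Matrix.add_mulVec, Matrix.smul_mulVec,
          aux_vecMulVec, Matrix.mulVec_add, mulVec_smul, mulVec_smul, horth,
          mulVec_mulVec z Qᵀ (N * Q * Bᵀ), ← Matrix.mul_assoc Qᵀ (N * Q) Bᵀ,
          ← Matrix.mul_assoc Qᵀ N Q, hQ, Matrix.one_mul, hBz, hQb]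
        simp
end
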